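/- Suppose n ≥ 2 and {1,…,n} is the disjoint union of two nonempty subsets S_1 and S_2, and suppose the moments factorize over this splitting, i.e. m(T_1 ∪ T_2) = m(T_1)·m(T_2) for every nonempty T_1 ⊆ S_1 and every nonempty T_2 ⊆ S_2. Then the cumulant of the full set vanishes: c({1,…,n}) = 0. -/

import Mathlib

/-- The joint cumulant `c(S)` associated to a system of joint moments
`m : Finset (Fin n) → ℂ`:
`c(S) = Σ_{partitions {B₁,…,B_k} of S} (k−1)! (−1)^(k−1) ∏_j m(B_j)`. -/
noncomputable def cumulant {n : ℕ} (m : Finset (Fin n) → ℂ) (S : Finset (Fin n)) : ℂ :=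
  ∑ P : Finpartition S,
    (Nat.factorial (P.parts.card - 1) : ℂ) * (-1) ^ (P.parts.card - 1) *
      ∏ B ∈ P.parts, m B

open Finset List Nat

namespace CumulantAux


variable {β : Type*} [DecidableEq β]

/-- All orderings (nodup lists) of a finset. -/
noncomputable def orderings (s : Finset β) : Finset (List β) := s.toList.permutations.toFinset

lemma mem_orderings {s : Finset β} {l : List β} :
    l ∈ orderings s ↔ l.Nodup ∧ l.toFinset = s := by
  simp only [orderings, List.mem_toFinset, List.mem_permutations]
  constructor
  · intro h
    refine ⟨h.nodup_iff.2 s.nodup_toList, ?_⟩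
    rw [List.toFinset_eq_of_perm _ _ h, Finset.toList_toFinset]
  · rintro ⟨h1, rfl⟩
    exact (List.toFinset_toList h1).symm

lemma card_orderings (s : Finset β) : (orderings s).card = s.card ! := by
  rw [orderings, List.toFinset_card_of_nodup (List.nodup_permutations _ s.nodup_toList),
    List.length_permutations, Finset.length_toList]

lemma card_orderings_headI [Inhabited β] (s : Finset β) (b₀ : β) (hb : b₀ ∈ s) :
    ((orderings s).filter (fun l => l.headI = b₀)).card = (s.card - 1)! := by
  have key : ((orderings s).filter (fun l => l.headI = b₀)).card
      = (orderings (s.erase b₀)).card := by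
    apply Finset.card_bij' (fun l _ => l.tail) (fun t _ => b₀ :: t)
    · intro l hl
      simp only [Finset.mem_filter, mem_orderings] at hl
      obtain ⟨⟨hnd, hfs⟩, hh⟩ := hl
      obtain ⟨a, t, rfl⟩ : ∃ a t, l = a :: t := by
        cases l with
        | nil => exfalso; rw [← hfs] at hb; simp at hb
        | cons a t => exact ⟨a, t, rfl⟩
      simp only [List.headI] at hh
      subst hh
      rw [mem_orderings]
      simp only [List.nodup_cons] at hnd
      refine ⟨hnd.2, ?_⟩
      simp only [List.toFinset_cons] at hfs
      rw [List.tail_cons, ← hfs, Finset.erase_insert (by simpa using hnd.1)]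
    · intro t ht
      rw [mem_orderings] at ht
      have hb0 : b₀ ∉ t := fun h => (Finset.mem_erase.1 (ht.2 ▸ List.mem_toFinset.2 h)).1 rfl
      rw [Finset.mem_filter, mem_orderings]
      refine ⟨⟨List.nodup_cons.2 ⟨hb0, ht.1⟩, ?_⟩, rfl⟩
      rw [List.toFinset_cons, ht.2, Finset.insert_erase hb]
    · intro l hl
      simp only [Finset.mem_filter, mem_orderings] at hl
      obtain ⟨⟨hnd, hfs⟩, hh⟩ := hl
      cases l with
      | nil => exfalso; rw [← hfs] at hb; simp at hb
      | cons a t => simp_all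
    · intro t ht
      simp
  rw [key, card_orderings, Finset.card_erase_of_mem hb]


variable {n : ℕ} (S₁ S₂ : Finset (Fin n))

def g : List (Finset (Fin n)) → List (Finset (Fin n))
  | [] => []
  | [B] => if B ∩ S₂ = ∅ then [B] else if B ∩ S₁ = ∅ then [B] else [B ∩ S₁, B ∩ S₂]
  | B :: C :: r =>
    if B ∩ S₂ = ∅ then
      if C ∩ S₂ = ∅ then B :: g (C :: r)
      else if C ∩ S₁ = ∅ then (B ∪ C) :: r
      else B :: (C ∩ S₁) :: (C ∩ S₂) :: r
    else if B ∩ S₁ = ∅ then B :: C :: r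
    else (B ∩ S₁) :: (B ∩ S₂) :: C :: r

section helpers
variable {S₁ S₂}

lemma inter_split (hu : S₁ ∪ S₂ = Finset.univ) (B : Finset (Fin n)) :
    B ∩ S₁ ∪ B ∩ S₂ = B := by
  rw [← Finset.inter_union_distrib_left, hu, Finset.inter_univ]

lemma inter12 (hd : Disjoint S₁ S₂) (B : Finset (Fin n)) : (B ∩ S₁) ∩ S₂ = ∅ := by
  rw [Finset.inter_assoc, (Finset.disjoint_iff_inter_eq_empty.1 hd), Finset.inter_empty]

lemma inter21 (hd : Disjoint S₁ S₂) (B : Finset (Fin n)) : (B ∩ S₂) ∩ S₁ = ∅ := by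
  rw [Finset.inter_assoc, Finset.inter_comm S₂ S₁, (Finset.disjoint_iff_inter_eq_empty.1 hd), Finset.inter_empty]

lemma inter22 (B : Finset (Fin n)) : (B ∩ S₂) ∩ S₂ = B ∩ S₂ := by
  rw [Finset.inter_assoc, Finset.inter_self]

lemma pure1 (hu : S₁ ∪ S₂ = Finset.univ) {B : Finset (Fin n)} (h : B ∩ S₂ = ∅) :
    B ∩ S₁ = B := by
  conv_rhs => rw [← inter_split hu B]
  rw [h, Finset.union_empty]

lemma pure2 (hu : S₁ ∪ S₂ = Finset.univ) {B : Finset (Fin n)} (h : B ∩ S₁ = ∅) :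
    B ∩ S₂ = B := by
  conv_rhs => rw [← inter_split hu B]
  rw [h, Finset.empty_union]

end helpers

lemma g_fix {D : Finset (Fin n)} (M : List (Finset (Fin n)))
    (h2 : D ∩ S₂ ≠ ∅) (h1 : D ∩ S₁ = ∅) : g S₁ S₂ (D :: M) = D :: M := by
  cases M <;> simp [g, h2, h1]

lemma g_split {D : Finset (Fin n)} (M : List (Finset (Fin n)))
    (h2 : D ∩ S₂ ≠ ∅) (h1 : D ∩ S₁ ≠ ∅) :
    g S₁ S₂ (D :: M) = (D ∩ S₁) :: (D ∩ S₂) :: M := by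
  cases M <;> simp [g, h2, h1]

variable {S₁ S₂}

lemma g_g (hd : Disjoint S₁ S₂) (hu : S₁ ∪ S₂ = Finset.univ) :
    ∀ l : List (Finset (Fin n)), (∀ B ∈ l, B.Nonempty) → g S₁ S₂ (g S₁ S₂ l) = l := by
  intro l
  induction l using g.induct S₁ S₂ with
  | case1 => intro _; simp [g]
  | case2 B hB => intro _; simp [g, hB]
  | case3 B hB2 hB1 => intro _; simp [g, hB2, hB1]
  | case4 B hB2 hB1 =>
    intro _
    rw [show g S₁ S₂ [B] = [B ∩ S₁, B ∩ S₂] by simp [g, hB2, hB1]]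
    rw [show g S₁ S₂ [B ∩ S₁, B ∩ S₂] = [B ∩ S₁ ∪ B ∩ S₂] by
      simp [g, inter12 hd, inter21 hd, inter22, hB2]]
    rw [inter_split hu]
  | case5 B C r hB hC ih =>
    intro hne
    have ihm := ih (fun X hX => hne X (List.mem_cons_of_mem _ hX))
    rw [show g S₁ S₂ (B :: C :: r) = B :: g S₁ S₂ (C :: r) by simp [g, hB, hC]]
    rcases hM : g S₁ S₂ (C :: r) with _ | ⟨D, M'⟩
    · rw [hM] at ihm; simp [g] at ihm
    · rw [hM] at ihm
      by_cases hD2 : D ∩ S₂ = ∅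
      · rw [show g S₁ S₂ (B :: D :: M') = B :: g S₁ S₂ (D :: M') by simp [g, hB, hD2]]
        rw [ihm]
      · by_cases hD1 : D ∩ S₁ = ∅
        · rw [g_fix _ _ _ hD2 hD1] at ihm
          obtain ⟨rfl, rfl⟩ : D = C ∧ M' = r := ⟨by injection ihm, by injection ihm⟩
          exact absurd hC hD2
        · rw [g_split _ _ _ hD2 hD1] at ihm
          rw [show g S₁ S₂ (B :: D :: M') = B :: (D ∩ S₁) :: (D ∩ S₂) :: M' by
            simp [g, hB, hD2, hD1]]
          rw [ihm]
  | case6 B C r hB hC2 hC1 =>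
    intro hne
    have hBne : B.Nonempty := hne B (by simp)
    have hCne : C.Nonempty := hne C (by simp)
    rw [show g S₁ S₂ (B :: C :: r) = (B ∪ C) :: r by simp [g, hB, hC2, hC1]]
    have e2 : (B ∪ C) ∩ S₂ = C := by
      rw [Finset.union_inter_distrib_right, hB, Finset.empty_union, pure2 hu hC1]
    have e1 : (B ∪ C) ∩ S₁ = B := by
      rw [Finset.union_inter_distrib_right, pure1 hu hB, hC1, Finset.union_empty]
    rw [g_split _ _ _ (by rw [e2]; exact Finset.nonempty_iff_ne_empty.1 hCne)
      (by rw [e1]; exact Finset.nonempty_iff_ne_empty.1 hBne), e1, e2]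
  | case7 B C r hB hC2 hC1 =>
    intro hne
    rw [show g S₁ S₂ (B :: C :: r) = B :: (C ∩ S₁) :: (C ∩ S₂) :: r by
      simp [g, hB, hC2, hC1]]
    rw [show g S₁ S₂ (B :: (C ∩ S₁) :: (C ∩ S₂) :: r)
        = B :: g S₁ S₂ ((C ∩ S₁) :: (C ∩ S₂) :: r) by simp [g, hB, inter12 hd]]
    rw [show g S₁ S₂ ((C ∩ S₁) :: (C ∩ S₂) :: r) = (C ∩ S₁ ∪ C ∩ S₂) :: r by
      simp [g, inter12 hd, inter21 hd, inter22, hC2]]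
    rw [inter_split hu]
  | case8 B C r hB2 hB1 =>
    intro _
    rw [show g S₁ S₂ (B :: C :: r) = B :: C :: r by simp [g, hB2, hB1]]
    rw [show g S₁ S₂ (B :: C :: r) = B :: C :: r by simp [g, hB2, hB1]]
  | case9 B C r hB2 hB1 =>
    intro _
    rw [show g S₁ S₂ (B :: C :: r) = (B ∩ S₁) :: (B ∩ S₂) :: C :: r by
      simp [g, hB2, hB1]]
    rw [show g S₁ S₂ ((B ∩ S₁) :: (B ∩ S₂) :: C :: r) = (B ∩ S₁ ∪ B ∩ S₂) :: C :: r by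
      simp [g, inter12 hd, inter21 hd, inter22, hB2]]
    rw [inter_split hu]

end CumulantAux

namespace CumulantAux2
open CumulantAux
variable {n : ℕ} {S₁ S₂ : Finset (Fin n)}

lemma mem_subset_foldr (t : List (Finset (Fin n))) {D : Finset (Fin n)} (h : D ∈ t) :
    D ⊆ t.foldr (· ∪ ·) ∅ := by
  induction t with
  | nil => simp at h
  | cons a s ih =>
    rcases List.mem_cons.1 h with rfl | h
    · exact Finset.subset_union_left
    · exact (ih h).trans Finset.subset_union_right

lemma disjoint_foldr {B : Finset (Fin n)} (t : List (Finset (Fin n)))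
    (h : ∀ E ∈ t, Disjoint B E) : Disjoint B (t.foldr (· ∪ ·) ∅) := by
  induction t with
  | nil => simp
  | cons a s ih =>
    simp only [List.foldr_cons, Finset.disjoint_union_right]
    exact ⟨h a (by simp), ih fun E hE => h E (by simp [hE])⟩

lemma g_props (x : Fin n) (hx : x ∈ S₁) (hd : Disjoint S₁ S₂) (hu : S₁ ∪ S₂ = Finset.univ) :
    ∀ l : List (Finset (Fin n)), (∀ B ∈ l, B.Nonempty) → l.Pairwise _root_.Disjoint →
      (∀ B ∈ g S₁ S₂ l, B.Nonempty) ∧ (g S₁ S₂ l).Pairwise _root_.Disjoint ∧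
      (g S₁ S₂ l).foldr (· ∪ ·) ∅ = l.foldr (· ∪ ·) ∅ ∧
      (x ∈ l.headI → x ∈ (g S₁ S₂ l).headI) := by
  intro l
  induction l using g.induct S₁ S₂ with
  | case1 => intro h1 h2; rw [show g S₁ S₂ [] = [] from rfl]; exact ⟨h1, h2, rfl, id⟩
  | case2 B hB => intro h1 h2; rw [show g S₁ S₂ [B] = [B] by simp [g, hB]]; exact ⟨h1, h2, rfl, id⟩
  | case3 B hB2 hB1 =>
    intro h1 h2; rw [show g S₁ S₂ [B] = [B] by simp [g, hB2, hB1]]; exact ⟨h1, h2, rfl, id⟩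
  | case4 B hB2 hB1 =>
    intro h1 h2
    rw [show g S₁ S₂ [B] = [B ∩ S₁, B ∩ S₂] by simp [g, hB2, hB1]]
    refine ⟨?_, ?_, ?_, ?_⟩
    · intro D hD
      rcases List.mem_cons.1 hD with rfl | hD
      · exact Finset.nonempty_iff_ne_empty.2 hB1
      · simp only [List.mem_singleton] at hD; subst hD
        exact Finset.nonempty_iff_ne_empty.2 hB2
    · refine List.pairwise_cons.2 ⟨?_, by simp⟩
      intro D hD; simp only [List.mem_singleton] at hD; subst hD
      exact hd.mono Finset.inter_subset_right Finset.inter_subset_right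
    · simp only [List.foldr_cons, List.foldr_nil]
      rw [← Finset.union_assoc]
      simp [inter_split hu]
    · intro hxB
      exact Finset.mem_inter.2 ⟨hxB, hx⟩
  | case5 B C r hB hC ih =>
    intro hne hpw
    obtain ⟨ih1, ih2, ih3, _⟩ := ih (fun X hX => hne X (List.mem_cons_of_mem _ hX))
      (List.pairwise_cons.1 hpw).2
    rw [show g S₁ S₂ (B :: C :: r) = B :: g S₁ S₂ (C :: r) by simp [g, hB, hC]]
    refine ⟨?_, ?_, ?_, ?_⟩
    · intro D hD
      rcases List.mem_cons.1 hD with rfl | hD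
      · exact hne D (by simp)
      · exact ih1 D hD
    · refine List.pairwise_cons.2 ⟨?_, ih2⟩
      intro D hD
      have hsub : D ⊆ (C :: r).foldr (· ∪ ·) ∅ := ih3 ▸ mem_subset_foldr _ hD
      have hdisj : Disjoint B ((C :: r).foldr (· ∪ ·) ∅) :=
        disjoint_foldr _ (List.pairwise_cons.1 hpw).1
      exact hdisj.mono_right hsub
    · simp only [List.foldr_cons] at ih3 ⊢
      rw [ih3]
    · intro hxB; exact hxB
  | case6 B C r hB hC2 hC1 =>
    intro hne hpw
    rw [show g S₁ S₂ (B :: C :: r) = (B ∪ C) :: r by simp [g, hB, hC2, hC1]]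
    obtain ⟨hBr, hpw'⟩ := List.pairwise_cons.1 hpw
    obtain ⟨hCr, hpwr⟩ := List.pairwise_cons.1 hpw'
    refine ⟨?_, ?_, ?_, ?_⟩
    · intro D hD
      rcases List.mem_cons.1 hD with rfl | hD
      · exact (hne B (by simp)).mono Finset.subset_union_left
      · exact hne D (by simp [hD])
    · refine List.pairwise_cons.2 ⟨?_, hpwr⟩
      intro D hD
      exact Finset.disjoint_union_left.2 ⟨hBr D (by simp [hD]), hCr D hD⟩
    · simp only [List.foldr_cons]
      rw [Finset.union_assoc]
    · intro hxB
      exact Finset.mem_union_left _ hxB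
  | case7 B C r hB hC2 hC1 =>
    intro hne hpw
    rw [show g S₁ S₂ (B :: C :: r) = B :: (C ∩ S₁) :: (C ∩ S₂) :: r by simp [g, hB, hC2, hC1]]
    obtain ⟨hBr, hpw'⟩ := List.pairwise_cons.1 hpw
    obtain ⟨hCr, hpwr⟩ := List.pairwise_cons.1 hpw'
    have hBC : _root_.Disjoint B C := hBr C (by simp)
    refine ⟨?_, ?_, ?_, ?_⟩
    · intro D hD
      rcases List.mem_cons.1 hD with rfl | hD
      · exact hne D (by simp)
      · rcases List.mem_cons.1 hD with rfl | hD
        · exact Finset.nonempty_iff_ne_empty.2 hC1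
        · rcases List.mem_cons.1 hD with rfl | hD
          · exact Finset.nonempty_iff_ne_empty.2 hC2
          · exact hne D (by simp [hD])
    · refine List.pairwise_cons.2 ⟨?_, List.pairwise_cons.2 ⟨?_, List.pairwise_cons.2 ⟨?_, hpwr⟩⟩⟩
      · intro D hD
        rcases List.mem_cons.1 hD with rfl | hD
        · exact hBC.mono_right Finset.inter_subset_left
        · rcases List.mem_cons.1 hD with rfl | hD
          · exact hBC.mono_right Finset.inter_subset_left
          · exact hBr D (by simp [hD])
      · intro D hD
        rcases List.mem_cons.1 hD with rfl | hD
        · exact hd.mono Finset.inter_subset_right Finset.inter_subset_right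
        · exact (hCr D hD).mono_left Finset.inter_subset_left
      · intro D hD
        exact (hCr D hD).mono_left Finset.inter_subset_left
    · simp only [List.foldr_cons]
      rw [← Finset.union_assoc (C ∩ S₁) (C ∩ S₂), inter_split hu]
    · intro hxB; exact hxB
  | case8 B C r hB2 hB1 =>
    intro h1 h2
    rw [show g S₁ S₂ (B :: C :: r) = B :: C :: r by simp [g, hB2, hB1]]
    exact ⟨h1, h2, rfl, id⟩
  | case9 B C r hB2 hB1 =>
    intro hne hpw
    rw [show g S₁ S₂ (B :: C :: r) = (B ∩ S₁) :: (B ∩ S₂) :: C :: r by simp [g, hB2, hB1]]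
    obtain ⟨hBr, hpw'⟩ := List.pairwise_cons.1 hpw
    refine ⟨?_, ?_, ?_, ?_⟩
    · intro D hD
      rcases List.mem_cons.1 hD with rfl | hD
      · exact Finset.nonempty_iff_ne_empty.2 hB1
      · rcases List.mem_cons.1 hD with rfl | hD
        · exact Finset.nonempty_iff_ne_empty.2 hB2
        · exact hne D (by simp [hD])
    · refine List.pairwise_cons.2 ⟨?_, List.pairwise_cons.2 ⟨?_, hpw'⟩⟩
      · intro D hD
        rcases List.mem_cons.1 hD with rfl | hD
        · exact hd.mono Finset.inter_subset_right Finset.inter_subset_right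
        · exact (hBr D hD).mono_left Finset.inter_subset_left
      · intro D hD
        exact (hBr D hD).mono_left Finset.inter_subset_left
    · simp only [List.foldr_cons]
      rw [← Finset.union_assoc, inter_split hu]
    · intro hxB
      exact Finset.mem_inter.2 ⟨hxB, hx⟩

lemma g_flip (m : Finset (Fin n) → ℂ) (hd : _root_.Disjoint S₁ S₂)
    (hu : S₁ ∪ S₂ = Finset.univ)
    (hfact : ∀ T₁ ⊆ S₁, ∀ T₂ ⊆ S₂, T₁.Nonempty → T₂.Nonempty →
      m (T₁ ∪ T₂) = m T₁ * m T₂) :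
    ∀ l : List (Finset (Fin n)), (∀ B ∈ l, B.Nonempty) → (∃ B ∈ l, B ∩ S₂ ≠ ∅) →
      (l.headI ∩ S₂ ≠ ∅ → l.headI ∩ S₁ ≠ ∅) →
      ((g S₁ S₂ l).map m).prod = (l.map m).prod ∧
        ((-1 : ℂ)) ^ (g S₁ S₂ l).length = -(-1 : ℂ) ^ l.length := by
  have hsplitm : ∀ B : Finset (Fin n), B ∩ S₂ ≠ ∅ → B ∩ S₁ ≠ ∅ →
      m (B ∩ S₁) * m (B ∩ S₂) = m B := by
    intro B h2 h1
    rw [← hfact (B ∩ S₁) Finset.inter_subset_right (B ∩ S₂) Finset.inter_subset_right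
      (Finset.nonempty_iff_ne_empty.2 h1) (Finset.nonempty_iff_ne_empty.2 h2),
      inter_split hu]
  have hmergem : ∀ B C : Finset (Fin n), B ∩ S₂ = ∅ → C ∩ S₁ = ∅ →
      B.Nonempty → C.Nonempty → m (B ∪ C) = m B * m C := by
    intro B C h2 h1 hB hC
    exact hfact B (by rw [← pure1 hu h2]; exact Finset.inter_subset_right) C
      (by rw [← pure2 hu h1]; exact Finset.inter_subset_right) hB hC
  intro l
  induction l using g.induct S₁ S₂ with
  | case1 => intro _ hex _; simp at hex
  | case2 B hB =>
    intro _ hex _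
    obtain ⟨X, hX, hX2⟩ := hex
    simp only [List.mem_singleton] at hX
    subst hX
    exact absurd hB hX2
  | case3 B hB2 hB1 =>
    intro _ _ hhead
    simp only [List.headI] at hhead
    exact absurd hB1 (hhead hB2)
  | case4 B hB2 hB1 =>
    intro _ _ _
    rw [show g S₁ S₂ [B] = [B ∩ S₁, B ∩ S₂] by simp [g, hB2, hB1]]
    constructor
    · simp only [List.map_cons, List.map_nil, List.prod_cons, List.prod_nil, mul_one]
      exact hsplitm B hB2 hB1
    · norm_num
  | case5 B C r hB hC ih =>
    intro hne hex hhead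
    have hex' : ∃ X ∈ C :: r, X ∩ S₂ ≠ ∅ := by
      obtain ⟨X, hX, hX2⟩ := hex
      rcases List.mem_cons.1 hX with rfl | hX
      · exact absurd hB hX2
      · exact ⟨X, hX, hX2⟩
    obtain ⟨ih1, ih2⟩ := ih (fun X hX => hne X (List.mem_cons_of_mem _ hX)) hex'
      (fun h => absurd hC h)
    rw [show g S₁ S₂ (B :: C :: r) = B :: g S₁ S₂ (C :: r) by simp [g, hB, hC]]
    constructor
    · simp only [List.map_cons, List.prod_cons, ih1]
    · simp only [List.length_cons, pow_succ, ih2]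
      ring
  | case6 B C r hB hC2 hC1 =>
    intro hne _ _
    rw [show g S₁ S₂ (B :: C :: r) = (B ∪ C) :: r by simp [g, hB, hC2, hC1]]
    constructor
    · simp only [List.map_cons, List.prod_cons, ← mul_assoc]
      rw [hmergem B C hB hC1 (hne B (by simp)) (hne C (by simp))]
    · simp only [List.length_cons, pow_succ]
      ring
  | case7 B C r hB hC2 hC1 =>
    intro _ _ _
    rw [show g S₁ S₂ (B :: C :: r) = B :: (C ∩ S₁) :: (C ∩ S₂) :: r by simp [g, hB, hC2, hC1]]
    constructor
    · simp only [List.map_cons, List.prod_cons, ← mul_assoc]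
      rw [mul_assoc (m B), hsplitm C hC2 hC1]
    · simp only [List.length_cons, pow_succ]
      ring
  | case8 B C r hB2 hB1 =>
    intro _ _ hhead
    simp only [List.headI] at hhead
    exact absurd hB1 (hhead hB2)
  | case9 B C r hB2 hB1 =>
    intro _ _ _
    rw [show g S₁ S₂ (B :: C :: r) = (B ∩ S₁) :: (B ∩ S₂) :: C :: r by simp [g, hB2, hB1]]
    constructor
    · simp only [List.map_cons, List.prod_cons, ← mul_assoc]
      rw [hsplitm B hB2 hB1]
    · simp only [List.length_cons, pow_succ]
      ring


end CumulantAux2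


section Assembly

open CumulantAux CumulantAux2

variable {n : ℕ} {S₁ S₂ : Finset (Fin n)}

lemma foldr_union_eq_sup (l : List (Finset (Fin n))) :
    l.foldr (· ∪ ·) ∅ = l.toFinset.sup id := by
  induction l with
  | nil => simp
  | cons a t ih => simp [Finset.sup_insert, ih]

lemma mem_foldr_union {y : Fin n} {l : List (Finset (Fin n))} :
    y ∈ l.foldr (· ∪ ·) ∅ ↔ ∃ B ∈ l, y ∈ B := by
  induction l with
  | nil => simp
  | cons a t ih => simp [ih]

end Assembly

theorem cumulant_eq_zero_of_factorizing {n : ℕ} (hn : 2 ≤ n)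
    (m : Finset (Fin n) → ℂ) (S₁ S₂ : Finset (Fin n))
    (h₁ : S₁.Nonempty) (h₂ : S₂.Nonempty)
    (hdisj : Disjoint S₁ S₂) (hunion : S₁ ∪ S₂ = Finset.univ)
    (hfact : ∀ T₁ ⊆ S₁, ∀ T₂ ⊆ S₂, T₁.Nonempty → T₂.Nonempty →
      m (T₁ ∪ T₂) = m T₁ * m T₂) :
    cumulant m Finset.univ = 0 := by
  classical
  obtain ⟨x, hx⟩ := h₁
  obtain ⟨y, hy⟩ := h₂
  have hnn : (0 : ℕ) < n := by omega
  haveI : Nonempty (Fin n) := ⟨⟨0, hnn⟩⟩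
  have huniv_ne : (Finset.univ : Finset (Fin n)) ≠ ⊥ := by
    rw [Finset.bot_eq_empty]
    exact (Finset.univ_nonempty).ne_empty
  -- notation
  set F : List (Finset (Fin n)) → ℂ := fun l => (-1) ^ (l.length + 1) * (l.map m).prod
    with hF
  set fib : Finpartition (Finset.univ : Finset (Fin n)) → Finset (List (Finset (Fin n))) :=
    fun P => (CumulantAux.orderings P.parts).filter (fun l => x ∈ l.headI) with hfib
  -- the predicate characterizing ordered partitions with x in the head
  set isOP : List (Finset (Fin n)) → Prop := fun l =>
    (∀ B ∈ l, B.Nonempty) ∧ l.Pairwise _root_.Disjoint ∧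
      l.foldr (· ∪ ·) ∅ = Finset.univ ∧ x ∈ l.headI with hisOP
  set L : Finset (List (Finset (Fin n))) := Finset.univ.biUnion fib with hL
  have fib_toFinset : ∀ P l, l ∈ fib P → l.Nodup ∧ l.toFinset = P.parts ∧ x ∈ l.headI := by
    intro P l hl
    simp only [hfib, Finset.mem_filter, CumulantAux.mem_orderings] at hl
    exact ⟨hl.1.1, hl.1.2, hl.2⟩
  have mem_L_iff : ∀ l, l ∈ L ↔ isOP l := by
    intro l
    constructor
    · intro hl
      rw [hL, Finset.mem_biUnion] at hl
      obtain ⟨P, -, hl⟩ := hl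
      obtain ⟨hnd, hfs, hhead⟩ := fib_toFinset P l hl
      refine ⟨?_, ?_, ?_, hhead⟩
      · intro B hB
        have : B ∈ P.parts := hfs ▸ List.mem_toFinset.2 hB
        refine Finset.nonempty_iff_ne_empty.2 fun h => P.bot_notMem ?_
        rwa [Finset.bot_eq_empty, ← h]
      · have pd := Finset.supIndep_iff_pairwiseDisjoint.1 P.supIndep
        refine List.Pairwise.imp_of_mem ?_ hnd
        intro a b ha hb hab
        exact pd (by rw [← hfs]; exact List.mem_toFinset.2 ha)
          (by rw [← hfs]; exact List.mem_toFinset.2 hb) hab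
      · rw [foldr_union_eq_sup, hfs, P.sup_parts]
    · intro hl
      obtain ⟨hne, hpw, hfold, hhead⟩ := hl
      have hnd : l.Nodup := by
        refine List.Pairwise.imp_of_mem ?_ hpw
        intro a b ha hb hab
        intro h
        subst h
        exact (hne a ha).ne_empty (by rw [← Finset.bot_eq_empty]; exact disjoint_self.1 hab)
      refine Finset.mem_biUnion.2 ⟨⟨l.toFinset, ?_, ?_, ?_⟩, Finset.mem_univ _, ?_⟩
      · refine Finset.supIndep_iff_pairwiseDisjoint.2 ?_
        intro a ha b hb hab
        exact (@List.Pairwise.forall _ _ _ ⟨fun _ _ h => h.symm⟩ hpw) (List.mem_toFinset.1 ha)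
          (List.mem_toFinset.1 hb) hab
      · rw [← foldr_union_eq_sup, hfold]
      · rw [Finset.bot_eq_empty]
        intro h
        exact (hne ∅ (List.mem_toFinset.1 h)).ne_empty rfl
      · simp only [hfib]
        refine Finset.mem_filter.2 ⟨CumulantAux.mem_orderings.2 ⟨hnd, rfl⟩, hhead⟩
  -- Step 1 : the cumulant equals the sum of F over L
  have step1 : cumulant m Finset.univ = ∑ l ∈ L, F l := by
    rw [hL, Finset.sum_biUnion]
    · rw [cumulant]
      refine Finset.sum_congr rfl ?_
      intro P _
      have hk : 1 ≤ P.parts.card :=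
        Finset.card_pos.2 (P.parts_nonempty huniv_ne)
      have hB₀ : P.part x ∈ P.parts := P.part_mem.2 (Finset.mem_univ x)
      have hconst : ∀ l ∈ fib P, F l = (-1) ^ (P.parts.card + 1) * ∏ B ∈ P.parts, m B := by
        intro l hl
        obtain ⟨hnd, hfs, -⟩ := fib_toFinset P l hl
        simp only [hF]
        have hlen : l.length = P.parts.card := by
          rw [← hfs, List.toFinset_card_of_nodup hnd]
        have hprod : (l.map m).prod = ∏ B ∈ P.parts, m B := by
          rw [← hfs, List.prod_toFinset m hnd]
        rw [hlen, hprod]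
      rw [Finset.sum_congr rfl hconst, Finset.sum_const]
      have hcard : (fib P).card = (P.parts.card - 1)! := by
        simp only [hfib]
        have : (CumulantAux.orderings P.parts).filter (fun l => x ∈ l.headI)
            = (CumulantAux.orderings P.parts).filter (fun l => l.headI = P.part x) := by
          refine Finset.filter_congr ?_
          intro l hl
          rw [CumulantAux.mem_orderings] at hl
          obtain ⟨hnd, hfs⟩ := hl
          have hlne : l ≠ [] := by
            intro h
            subst h
            rw [← hfs] at hB₀
            simp at hB₀
          have hheadmem : l.headI ∈ l := by
            cases l with
            | nil => exact absurd rfl hlne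
            | cons a t => exact List.mem_cons_self
          have hheadparts : l.headI ∈ P.parts := hfs ▸ List.mem_toFinset.2 hheadmem
          constructor
          · intro hxh
            exact P.eq_of_mem_parts hheadparts hB₀ hxh (P.mem_part (Finset.mem_univ x))
          · intro h
            rw [h]
            exact P.mem_part (Finset.mem_univ x)
        rw [this, CumulantAux.card_orderings_headI P.parts (P.part x) hB₀]
      rw [hcard]
      have hpow : ((-1 : ℂ)) ^ (P.parts.card + 1) = (-1 : ℂ) ^ (P.parts.card - 1) := by
        have h2 : P.parts.card + 1 = (P.parts.card - 1) + 2 := by omega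
        rw [h2, pow_add]
        norm_num
      rw [nsmul_eq_mul, hpow]
      ring
    · intro P _ P' _ hPP'
      simp only [Function.onFun]
      rw [Finset.disjoint_left]
      intro l hl hl'
      obtain ⟨-, hfs, -⟩ := fib_toFinset P l hl
      obtain ⟨-, hfs', -⟩ := fib_toFinset P' l hl'
      exact hPP' (Finpartition.ext (hfs ▸ hfs'))
  -- Step 2 : the sum over L vanishes because of the involution g
  have step2 : ∑ l ∈ L, F l = 0 := by
    have key : ∀ l ∈ L,
        ((CumulantAux.g S₁ S₂ l).map m).prod = (l.map m).prod ∧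
          ((-1 : ℂ)) ^ (CumulantAux.g S₁ S₂ l).length = -(-1 : ℂ) ^ l.length := by
      intro l hl
      obtain ⟨hne, hpw, hfold, hhead⟩ := (mem_L_iff l).1 hl
      have hex : ∃ B ∈ l, B ∩ S₂ ≠ ∅ := by
        have : y ∈ l.foldr (· ∪ ·) ∅ := by rw [hfold]; exact Finset.mem_univ y
        obtain ⟨B, hB, hyB⟩ := mem_foldr_union.1 this
        exact ⟨B, hB, Finset.nonempty_iff_ne_empty.1 ⟨y, Finset.mem_inter.2 ⟨hyB, hy⟩⟩⟩
      exact CumulantAux2.g_flip m hdisj hunion hfact l hne hex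
        (fun _ => Finset.nonempty_iff_ne_empty.1 ⟨x, Finset.mem_inter.2 ⟨hhead, hx⟩⟩)
    refine Finset.sum_involution (fun l _ => CumulantAux.g S₁ S₂ l) ?_ ?_ ?_ ?_
    · intro l hl
      obtain ⟨hprod, hsign⟩ := key l hl
      simp only [hF]
      simp only [pow_succ, hprod, hsign]
      ring
    · intro l hl _
      intro heq
      have heq' : CumulantAux.g S₁ S₂ l = l := heq
      obtain ⟨-, hsign⟩ := key l hl
      rw [heq'] at hsign
      have h0 : ((-1 : ℂ)) ^ l.length ≠ 0 := pow_ne_zero _ (by norm_num)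
      exact h0 (CharZero.eq_neg_self_iff.1 hsign)
    · intro l hl
      obtain ⟨hne, hpw, hfold, hhead⟩ := (mem_L_iff l).1 hl
      obtain ⟨p1, p2, p3, p4⟩ :=
        CumulantAux2.g_props x hx hdisj hunion l hne hpw
      exact (mem_L_iff _).2 ⟨p1, p2, by rw [p3, hfold], p4 hhead⟩
    · intro l hl
      obtain ⟨hne, -, -, -⟩ := (mem_L_iff l).1 hl
      exact CumulantAux.g_g hdisj hunion l hne
  rw [step1, step2]
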